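/- Let A be a filtered algebra with exhaustive ascending filtration A₀ ⊆ A₁ ⊆ ⋯ and t ∈ A with symbol σ(t) ∈ Gr A. If Gr A is a free module over ℂ[σ(t)], then A is a free module over ℂ[t]. -/

import Mathlib

namespace FilteredFree

variable {A : Type*} [Ring A] [Algebra ℂ A]

/-- `predF 𝓐 n = 𝓐 (n-1)` for `n ≥ 1`, and `⊥` for `n = 0`. -/
def predF (𝓐 : ℕ → Submodule ℂ A) : ℕ → Submodule ℂ A
  | 0 => ⊥
  | k + 1 => 𝓐 k

/-- The `n`-th piece `𝓐 n / 𝓐 (n-1)` of the associated graded of the filtration `𝓐`. -/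
abbrev grPiece (𝓐 : ℕ → Submodule ℂ A) (n : ℕ) : Type _ :=
  ↥(𝓐 n) ⧸ (Submodule.comap (𝓐 n).subtype (predF 𝓐 n))

/-- The associated graded vector space `Gr A = ⨁ₙ 𝓐 n / 𝓐 (n-1)`. -/
abbrev Gr (𝓐 : ℕ → Submodule ℂ A) : Type _ := DirectSum ℕ (fun n => grPiece 𝓐 n)

/-- Multiplication by the symbol `σ(t)` of an element `t ∈ 𝓐 d`, from the `n`-th graded
piece to the `(n+d)`-th one. -/
noncomputable def grShift (𝓐 : ℕ → Submodule ℂ A) (t : A) (d : ℕ)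
    (h : ∀ n, ∀ a ∈ 𝓐 n, t * a ∈ 𝓐 (n + d)) (n : ℕ) :
    grPiece 𝓐 n →ₗ[ℂ] grPiece 𝓐 (n + d) :=
  Submodule.mapQ _ _ ((LinearMap.mulLeft ℂ t).restrict (h n)) (by
    cases n with
    | zero => simp [predF]
    | succ k =>
        intro a ha
        have h1 : t * (a : A) ∈ 𝓐 (k + d) := h k _ ha
        have h2 : predF 𝓐 (k + 1 + d) = 𝓐 (k + d) := by
          rw [show k + 1 + d = (k + d) + 1 from by omega]; rfl
        show _ ∈ _
        simp only [Submodule.mem_comap, h2, Submodule.coe_subtype]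
        exact h1)

/-- Multiplication by the symbol `σ(t)` as a `ℂ`-linear endomorphism of `Gr A`. -/
noncomputable def grSymbolMul (𝓐 : ℕ → Submodule ℂ A) (t : A) (d : ℕ)
    (h : ∀ n, ∀ a ∈ 𝓐 n, t * a ∈ 𝓐 (n + d)) : Gr 𝓐 →ₗ[ℂ] Gr 𝓐 :=
  DirectSum.toModule ℂ ℕ (Gr 𝓐)
    (fun n => (DirectSum.lof ℂ ℕ (grPiece 𝓐) (n + d)).comp (grShift 𝓐 t d h n))

instance grAddCommGroup (𝓐 : ℕ → Submodule ℂ A) : AddCommGroup (Gr 𝓐) :=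
  @DirectSum.instAddCommGroup ℕ (fun n => grPiece 𝓐 n) (fun _ => inferInstance)

section Aux

open Polynomial

variable (𝓐 : ℕ → Submodule ℂ A) (t : A) (d : ℕ)
  (h : ∀ n, ∀ a ∈ 𝓐 n, t * a ∈ 𝓐 (n + d))

/-- The projection onto the `n`-th graded piece. -/
noncomputable def gpi (n : ℕ) : ↥(𝓐 n) →ₗ[ℂ] grPiece 𝓐 n :=
  (Submodule.comap (𝓐 n).subtype (predF 𝓐 n)).mkQ

/-- The inclusion of the `n`-th graded piece into `Gr`. -/
noncomputable def gio (n : ℕ) : grPiece 𝓐 n →ₗ[ℂ] Gr 𝓐 :=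
  DirectSum.lof ℂ ℕ (grPiece 𝓐) n

lemma gio_comp (n : ℕ) (x : grPiece 𝓐 n) :
    DirectSum.component ℂ ℕ (grPiece 𝓐) n (gio 𝓐 n x) = x :=
  DirectSum.component.lof_self (R := ℂ) n x

lemma gio_comp_ne {n m : ℕ} (hnm : n ≠ m) (x : grPiece 𝓐 n) :
    DirectSum.component ℂ ℕ (grPiece 𝓐) m (gio 𝓐 n x) = 0 := by
  rw [gio, DirectSum.component.of]
  exact dif_neg hnm

lemma gio_inj (n : ℕ) : Function.Injective (gio 𝓐 n) := by
  intro x y hxy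
  have := congrArg (DirectSum.component ℂ ℕ (grPiece 𝓐) n) hxy
  rwa [gio_comp, gio_comp] at this

lemma sigma_gio (n : ℕ) (x : grPiece 𝓐 n) :
    grSymbolMul 𝓐 t d h (gio 𝓐 n x) = gio 𝓐 (n + d) (grShift 𝓐 t d h n x) := by
  rw [grSymbolMul, gio, DirectSum.toModule_lof]
  rfl

lemma comp_sigma (z : Gr 𝓐) (n : ℕ) :
    DirectSum.component ℂ ℕ (grPiece 𝓐) (n + d) (grSymbolMul 𝓐 t d h z) =
      grShift 𝓐 t d h n (DirectSum.component ℂ ℕ (grPiece 𝓐) n z) := by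
  induction z using DirectSum.induction_on with
  | zero => simp
  | of j x =>
      rw [← DirectSum.lof_eq_of ℂ, ← gio, sigma_gio]
      rcases eq_or_ne j n with rfl | hne
      · rw [gio_comp, gio_comp]
      · rw [gio_comp_ne 𝓐 (show j + d ≠ n + d by omega) _, gio_comp_ne 𝓐 hne _, map_zero]
  | add x y hx hy => simp [map_add, hx, hy]

lemma comp_sigma_lt (z : Gr 𝓐) {m : ℕ} (hm : m < d) :
    DirectSum.component ℂ ℕ (grPiece 𝓐) m (grSymbolMul 𝓐 t d h z) = 0 := by
  induction z using DirectSum.induction_on with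
  | zero => simp
  | of j x =>
      rw [← DirectSum.lof_eq_of ℂ, ← gio, sigma_gio]
      exact gio_comp_ne 𝓐 (by omega) _
  | add x y hx hy => simp [map_add, hx, hy]

lemma gio_comp_sigma (z : Gr 𝓐) {n m : ℕ} (hm : n + d = m) :
    gio 𝓐 m (DirectSum.component ℂ ℕ (grPiece 𝓐) m (grSymbolMul 𝓐 t d h z)) =
      grSymbolMul 𝓐 t d h (gio 𝓐 n (DirectSum.component ℂ ℕ (grPiece 𝓐) n z)) := by
  subst hm
  rw [comp_sigma, sigma_gio]

lemma gpi_shift {n m : ℕ} (hm : n + d = m) (x : ↥(𝓐 n)) (hx : t * ↑x ∈ 𝓐 m) :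
    gio 𝓐 m (gpi 𝓐 m ⟨t * ↑x, hx⟩) = grSymbolMul 𝓐 t d h (gio 𝓐 n (gpi 𝓐 n x)) := by
  subst hm
  rw [sigma_gio]
  have h1 : grShift 𝓐 t d h n (gpi 𝓐 n x) =
      gpi 𝓐 (n + d) (((LinearMap.mulLeft ℂ t).restrict (h n)) x) := by
    simp only [gpi, Submodule.mkQ_apply, grShift, Submodule.mapQ_apply]
  rw [h1]
  congr 2

include h in
lemma tpow_mem (k n : ℕ) (a : A) (ha : a ∈ 𝓐 n) : t ^ k * a ∈ 𝓐 (n + d * k) := by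
  induction k with
  | zero => simpa using ha
  | succ k ih =>
      have heq : t ^ (k + 1) * a = t * (t ^ k * a) := by rw [pow_succ', mul_assoc]
      rw [heq]
      have hh := h _ _ ih
      have he : n + d * k + d = n + d * (k + 1) := by ring
      rwa [he] at hh

lemma gpi_shift_pow (k : ℕ) {n m : ℕ} (hm : n + d * k = m) (x : ↥(𝓐 n))
    (hx : t ^ k * ↑x ∈ 𝓐 m) :
    gio 𝓐 m (gpi 𝓐 m ⟨t ^ k * ↑x, hx⟩) =
      ((grSymbolMul 𝓐 t d h) ^ k) (gio 𝓐 n (gpi 𝓐 n x)) := by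
  induction k generalizing m with
  | zero =>
      have hm' : m = n := by simpa using hm.symm
      subst hm'
      have : (⟨t ^ 0 * ↑x, hx⟩ : ↥(𝓐 m)) = x := by ext; simp
      rw [this, pow_zero, Module.End.one_apply]
  | succ k ih =>
      rw [Nat.mul_succ] at hm
      have hmem : t ^ k * ↑x ∈ 𝓐 (n + d * k) := tpow_mem 𝓐 t d h k n ↑x x.2
      have hx' : t * ↑(⟨t ^ k * ↑x, hmem⟩ : ↥(𝓐 (n + d * k))) ∈ 𝓐 m := by
        have hh := h _ _ hmem
        have he : n + d * k + d = m := by omega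
        rwa [he] at hh
      have hval : (⟨t ^ (k + 1) * ↑x, hx⟩ : ↥(𝓐 m)) =
          ⟨t * (t ^ k * ↑x), hx'⟩ := by
        apply Subtype.ext
        show t ^ (k + 1) * ↑x = t * (t ^ k * ↑x)
        rw [pow_succ', mul_assoc]
      rw [hval, gpi_shift 𝓐 t d h (by omega) _ hx', ih (by omega) hmem]
      rw [pow_succ']
      rfl

/-- The "image of `σ(t)`" part of the `m`-th graded piece. -/
noncomputable def Wp (m : ℕ) : Submodule ℂ (grPiece 𝓐 m) :=
  Submodule.comap (gio 𝓐 m) (LinearMap.range (grSymbolMul 𝓐 t d h))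

/-- A complement to `Wp` in the `m`-th graded piece. -/
noncomputable def Cp (m : ℕ) : Submodule ℂ (grPiece 𝓐 m) :=
  ((Wp 𝓐 t d h m).exists_isCompl).choose

lemma isCompl_Cp (m : ℕ) : IsCompl (Wp 𝓐 t d h m) (Cp 𝓐 t d h m) :=
  ((Wp 𝓐 t d h m).exists_isCompl).choose_spec

/-- A basis of `Cp m`. -/
noncomputable def bC (m : ℕ) :
    Module.Basis (Module.Basis.ofVectorSpaceIndex ℂ ↥(Cp 𝓐 t d h m)) ℂ ↥(Cp 𝓐 t d h m) :=
  Module.Basis.ofVectorSpace ℂ _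

/-- The index type of the basis to be constructed. -/
abbrev Idx : Type _ := Σ m : ℕ, Module.Basis.ofVectorSpaceIndex ℂ ↥(Cp 𝓐 t d h m)

/-- The chosen basis vectors of the complements, inside the graded pieces. -/
noncomputable def cElt (i : Idx 𝓐 t d h) : grPiece 𝓐 i.1 :=
  ↑(bC 𝓐 t d h i.1 i.2)

lemma cElt_mem (i : Idx 𝓐 t d h) : cElt 𝓐 t d h i ∈ Cp 𝓐 t d h i.1 :=
  (bC 𝓐 t d h i.1 i.2).2

/-- Lifts of the basis vectors to the filtration. -/
noncomputable def bElt (i : Idx 𝓐 t d h) : ↥(𝓐 i.1) :=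
  (Submodule.Quotient.mk_surjective _ (cElt 𝓐 t d h i)).choose

lemma gpi_bElt (i : Idx 𝓐 t d h) : gpi 𝓐 i.1 (bElt 𝓐 t d h i) = cElt 𝓐 t d h i :=
  (Submodule.Quotient.mk_surjective _ (cElt 𝓐 t d h i)).choose_spec

lemma Wp_struct {m : ℕ} {w : grPiece 𝓐 m} (hw : w ∈ Wp 𝓐 t d h m) :
    w = 0 ∨ (d ≤ m ∧ ∃ y : grPiece 𝓐 (m - d),
      gio 𝓐 m w = grSymbolMul 𝓐 t d h (gio 𝓐 (m - d) y)) := by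
  obtain ⟨z, hz⟩ := Submodule.mem_comap.mp hw
  by_cases hdm : d ≤ m
  · right
    refine ⟨hdm, DirectSum.component ℂ ℕ (grPiece 𝓐) (m - d) z, ?_⟩
    have h1 := gio_comp_sigma 𝓐 t d h z (Nat.sub_add_cancel hdm)
    rw [hz, gio_comp] at h1
    exact h1
  · left
    have h1 : DirectSum.component ℂ ℕ (grPiece 𝓐) m (grSymbolMul 𝓐 t d h z) = 0 :=
      comp_sigma_lt 𝓐 t d h z (by omega)
    rw [hz, gio_comp] at h1
    exact h1

lemma Gind : LinearIndependent ℂ (fun i : Idx 𝓐 t d h => gio 𝓐 i.1 (cElt 𝓐 t d h i)) := by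
  classical
  have hker : LinearMap.ker
      (DFinsupp.mapRange.linearMap (fun m => (Cp 𝓐 t d h m).subtype)) = ⊥ := by
    refine LinearMap.ker_eq_bot_of_injective ?_
    intro x y hxy
    ext m
    have h2 := congrFun (congrArg DFunLike.coe hxy) m
    simp only [DFinsupp.mapRange.linearMap_apply, DFinsupp.mapRange_apply] at h2
    exact h2
  have hfam : (fun i : Idx 𝓐 t d h => gio 𝓐 i.1 (cElt 𝓐 t d h i)) =
      ⇑(DFinsupp.mapRange.linearMap (fun m => (Cp 𝓐 t d h m).subtype)) ∘
        ⇑(DFinsupp.basis (fun m => bC 𝓐 t d h m)) := by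
    funext i
    have hb : (DFinsupp.basis (fun m => bC 𝓐 t d h m)) ⟨i.1, i.2⟩ =
        DFinsupp.single i.1 (bC 𝓐 t d h i.1 i.2) := by
      simp [DFinsupp.basis, Module.Basis.apply_eq_iff]
    show gio 𝓐 i.1 (cElt 𝓐 t d h i) = _
    rw [Function.comp_apply]
    rw [show (i : Idx 𝓐 t d h) = ⟨i.1, i.2⟩ from rfl, hb]
    simp only [DFinsupp.mapRange.linearMap_apply, DFinsupp.mapRange_single]
    rfl
  rw [hfam]
  have hb := (DFinsupp.basis (fun m => bC 𝓐 t d h m)).linearIndependent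
  have hi : Function.Injective (DFinsupp.mapRange.linearMap (fun m => (Cp 𝓐 t d h m).subtype)) := by
    intro x y hxy
    ext m
    have h2 := congrFun (congrArg DFunLike.coe hxy) m
    simp only [DFinsupp.mapRange.linearMap_apply, DFinsupp.mapRange_apply] at h2
    exact h2
  exact hb.map_of_injective_injectiveₛ id
    (DFinsupp.mapRange.linearMap (fun m => (Cp 𝓐 t d h m).subtype)).toAddMonoidHom
    Function.injective_id hi
    (fun r m => (DFinsupp.mapRange.linearMap (fun m => (Cp 𝓐 t d h m).subtype)).map_smul r m)

lemma Cdisj (hinj : Function.Injective ⇑(grSymbolMul 𝓐 t d h)) :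
    Disjoint (⨆ m, (Cp 𝓐 t d h m).map (gio 𝓐 m)) (LinearMap.range (grSymbolMul 𝓐 t d h)) := by
  rw [Submodule.disjoint_def]
  intro x hxC hxR
  obtain ⟨z, hz⟩ := hxR
  have hcomp : ∀ m, DirectSum.component ℂ ℕ (grPiece 𝓐) m x ∈ Cp 𝓐 t d h m := by
    have hle : (⨆ m, (Cp 𝓐 t d h m).map (gio 𝓐 m)) ≤
        ⨅ m, Submodule.comap (DirectSum.component ℂ ℕ (grPiece 𝓐) m) (Cp 𝓐 t d h m) := by
      refine iSup_le fun n => ?_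
      rintro y ⟨c, hc, rfl⟩
      rw [Submodule.mem_iInf]
      intro m
      rw [Submodule.mem_comap]
      rcases eq_or_ne n m with rfl | hne
      · rw [gio_comp]; exact hc
      · rw [gio_comp_ne 𝓐 hne]; exact Submodule.zero_mem _
    intro m
    exact Submodule.mem_iInf _ |>.mp (hle hxC) m
  have hW : ∀ m, DirectSum.component ℂ ℕ (grPiece 𝓐) m x ∈ Wp 𝓐 t d h m := by
    intro m
    rw [Wp, Submodule.mem_comap]
    by_cases hdm : d ≤ m
    · refine ⟨gio 𝓐 (m - d) (DirectSum.component ℂ ℕ (grPiece 𝓐) (m - d) z), ?_⟩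
      rw [← gio_comp_sigma 𝓐 t d h z (Nat.sub_add_cancel hdm), hz]
    · have h0 : DirectSum.component ℂ ℕ (grPiece 𝓐) m x = 0 := by
        rw [← hz]; exact comp_sigma_lt 𝓐 t d h z (by omega)
      rw [h0, map_zero]
      exact Submodule.zero_mem _
  have hzero : ∀ m, DirectSum.component ℂ ℕ (grPiece 𝓐) m x = 0 := fun m =>
    Submodule.disjoint_def.mp (isCompl_Cp 𝓐 t d h m).disjoint _ (hW m) (hcomp m)
  refine DFinsupp.ext fun m => ?_
  exact hzero m

lemma GI (hinj : Function.Injective ⇑(grSymbolMul 𝓐 t d h)) :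
    LinearIndependent ℂ (fun p : Idx 𝓐 t d h × ℕ =>
      ((grSymbolMul 𝓐 t d h) ^ p.2) (gio 𝓐 p.1.1 (cElt 𝓐 t d h p.1))) := by
  classical
  rw [linearIndependent_iff']
  intro s₀ g₀ hsum₀ p₀ hp₀
  suffices H : ∀ K : ℕ, ∀ s : Finset (Idx 𝓐 t d h × ℕ), ∀ g : Idx 𝓐 t d h × ℕ → ℂ,
      (∀ p ∈ s, p.2 ≤ K) →
      (∑ p ∈ s, g p • ((grSymbolMul 𝓐 t d h) ^ p.2) (gio 𝓐 p.1.1 (cElt 𝓐 t d h p.1))) = 0 →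
      ∀ p ∈ s, g p = 0 by
    exact H (s₀.sup Prod.snd) s₀ g₀ (fun p hp => Finset.le_sup hp) hsum₀ p₀ hp₀
  intro K
  induction K using Nat.strong_induction_on with
  | _ K ih =>
  intro s g hK hsum q hq
  set σm := grSymbolMul 𝓐 t d h with hσm
  set G : Idx 𝓐 t d h → Gr 𝓐 := fun i => gio 𝓐 i.1 (cElt 𝓐 t d h i) with hG
  set s0 := s.filter (fun p => p.2 = 0) with hs0
  set s1 := s.filter (fun p => ¬ p.2 = 0) with hs1
  have hsplit : (∑ p ∈ s0, g p • (σm ^ p.2) (G p.1)) +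
      (∑ p ∈ s1, g p • (σm ^ p.2) (G p.1)) = 0 := by
    rw [Finset.sum_filter_add_sum_filter_not]
    exact hsum
  have h0 : ∑ p ∈ s0, g p • (σm ^ p.2) (G p.1) = ∑ p ∈ s0, g p • G p.1 := by
    refine Finset.sum_congr rfl fun p hp => ?_
    rw [(Finset.mem_filter.mp hp).2, pow_zero, Module.End.one_apply]
  have h1 : ∑ p ∈ s1, g p • (σm ^ p.2) (G p.1) =
      σm (∑ p ∈ s1, g p • (σm ^ (p.2 - 1)) (G p.1)) := by
    rw [map_sum]
    refine Finset.sum_congr rfl fun p hp => ?_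
    have hp2 : ¬ p.2 = 0 := (Finset.mem_filter.mp hp).2
    rw [map_smul]
    congr 1
    conv_lhs => rw [show p.2 = (p.2 - 1) + 1 by omega]
    rw [pow_succ']
    rfl
  have hx0 : ∑ p ∈ s0, g p • G p.1 ∈ ⨆ m, (Cp 𝓐 t d h m).map (gio 𝓐 m) := by
    refine Submodule.sum_mem _ fun p hp => Submodule.smul_mem _ _ ?_
    exact Submodule.mem_iSup_of_mem p.1.1 ⟨cElt 𝓐 t d h p.1, cElt_mem 𝓐 t d h p.1, rfl⟩
  rw [h0, h1] at hsplit
  have hx0r : ∑ p ∈ s0, g p • G p.1 ∈ LinearMap.range σm := by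
    have he : ∑ p ∈ s0, g p • G p.1 = σm (- ∑ p ∈ s1, g p • (σm ^ (p.2 - 1)) (G p.1)) :=
      (eq_neg_of_add_eq_zero_left hsplit).trans (map_neg σm _).symm
    exact ⟨_, he.symm⟩
  have hx0z : ∑ p ∈ s0, g p • G p.1 = 0 :=
    Submodule.disjoint_def.mp (Cdisj 𝓐 t d h hinj) _ hx0 hx0r
  have hyz : ∑ p ∈ s1, g p • (σm ^ (p.2 - 1)) (G p.1) = 0 := by
    apply hinj
    rw [map_zero]
    rw [hx0z, zero_add] at hsplit
    exact hsplit
  have ha0 : ∀ p ∈ s0, g p = 0 := by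
    have hrel : ∑ i ∈ s0.image Prod.fst, g (i, 0) • G i = 0 := by
      rw [Finset.sum_image ?hinj]
      case hinj =>
        intro p hp p' hp' hpe
        have e0 : p.2 = 0 := (Finset.mem_filter.mp hp).2
        have e0' : p'.2 = 0 := (Finset.mem_filter.mp hp').2
        exact Prod.ext_iff.mpr ⟨hpe, e0.trans e0'.symm⟩
      rw [← hx0z]
      refine Finset.sum_congr rfl fun p hp => ?_
      have e0 : p.2 = 0 := (Finset.mem_filter.mp hp).2
      rw [show (p.1, (0:ℕ)) = p from Prod.ext_iff.mpr ⟨rfl, e0.symm⟩]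
    intro p hp
    have e0 : p.2 = 0 := (Finset.mem_filter.mp hp).2
    have := linearIndependent_iff'.mp (Gind 𝓐 t d h) (s0.image Prod.fst)
      (fun i => g (i, 0)) hrel p.1 (Finset.mem_image_of_mem Prod.fst hp)
    rw [show p = (p.1, (0:ℕ)) from Prod.ext_iff.mpr ⟨rfl, e0⟩]
    exact this
  have ha1 : ∀ p ∈ s1, g p = 0 := by
    intro p hp
    have hp2 : ¬ p.2 = 0 := (Finset.mem_filter.mp hp).2
    have hpK : p.2 ≤ K := hK p (Finset.mem_filter.mp hp).1
    have hK1 : K - 1 < K := by omega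
    have hinjOn : ∀ a ∈ s1, ∀ b ∈ s1,
        (a.1, a.2 - 1) = (b.1, b.2 - 1) → a = b := by
      intro a ha b hb hab
      have ha2 : ¬ a.2 = 0 := (Finset.mem_filter.mp ha).2
      have hb2 : ¬ b.2 = 0 := (Finset.mem_filter.mp hb).2
      obtain ⟨e1, e2⟩ := Prod.ext_iff.mp hab
      exact Prod.ext_iff.mpr ⟨e1, by omega⟩
    have hrel : ∑ q ∈ s1.image (fun p => (p.1, p.2 - 1)),
        g (q.1, q.2 + 1) • (σm ^ q.2) (G q.1) = 0 := by
      rw [Finset.sum_image hinjOn, ← hyz]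
      refine Finset.sum_congr rfl fun a ha => ?_
      have ha2 : ¬ a.2 = 0 := (Finset.mem_filter.mp ha).2
      rw [show (a.2 - 1 + 1) = a.2 by omega]
    have := ih (K - 1) hK1 (s1.image (fun p => (p.1, p.2 - 1)))
      (fun q => g (q.1, q.2 + 1)) ?bound hrel (p.1, p.2 - 1)
      (Finset.mem_image_of_mem _ hp)
    case bound =>
      intro q hq
      obtain ⟨a, ha, rfl⟩ := Finset.mem_image.mp hq
      have ha2 : ¬ a.2 = 0 := (Finset.mem_filter.mp ha).2
      have : a.2 ≤ K := hK a (Finset.mem_filter.mp ha).1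
      omega
    simp only at this
    rwa [show (p.1, p.2 - 1 + 1) = p from Prod.ext_iff.mpr ⟨rfl, by omega⟩] at this
  by_cases hq2 : q.2 = 0
  · exact ha0 q (Finset.mem_filter.mpr ⟨hq, hq2⟩)
  · exact ha1 q (Finset.mem_filter.mpr ⟨hq, hq2⟩)


end Aux

set_option maxHeartbeats 2000000 in
open Polynomial in
theorem free_of_gr_free' (𝓐 : ℕ → Submodule ℂ A)
    (hmono : Monotone 𝓐) (hexh : ⨆ n, 𝓐 n = ⊤)
    (t : A) (d : ℕ) (hd : 1 ≤ d)
    (h : ∀ n, ∀ a ∈ 𝓐 n, t * a ∈ 𝓐 (n + d))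
    (hfree : Module.Free (Polynomial ℂ) (Module.AEval' (grSymbolMul 𝓐 t d h))) :
    Module.Free (Polynomial ℂ) (Module.AEval' (LinearMap.mulLeft ℂ t)) := by
  classical
  haveI := hfree
  set σm := grSymbolMul 𝓐 t d h with hσm
  -- injectivity of multiplication by the symbol
  have hinj : Function.Injective ⇑σm := by
    have hX : ∀ z : Gr 𝓐, σm z = 0 → z = 0 := by
      intro z hz
      have h2 : (X : ℂ[X]) • (Module.AEval'.of σm z) = 0 := by
        rw [Module.AEval'.X_smul_of, hz, map_zero]
      rcases smul_eq_zero.mp h2 with h3 | h3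
      · exact absurd h3 Polynomial.X_ne_zero
      · simpa using congrArg (Module.AEval'.of σm).symm h3
    intro x y hxy
    have := hX (x - y) (by rw [map_sub, hxy, sub_self])
    exact sub_eq_zero.mp this
  set E := Module.AEval'.of (LinearMap.mulLeft ℂ t) with hE
  have hsmulE : ∀ (p : ℂ[X]) (a : A),
      p • (E a) = E (Polynomial.aeval t p * a) := by
    intro p a
    have hml : ∀ c : A, (Algebra.lmul ℂ A) c = LinearMap.mulLeft ℂ c := by
      intro c
      apply LinearMap.ext
      intro b
      rw [LinearMap.mulLeft_apply]
      rw [show (Algebra.lmul ℂ A) c = LinearMap.mul ℂ A c from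
        congrFun (Algebra.coe_lmul_eq_mul (R := ℂ) (A := A)) c]
      rw [LinearMap.mul_apply']
    have h1 : Polynomial.aeval (LinearMap.mulLeft ℂ t) p
        = LinearMap.mulLeft ℂ (Polynomial.aeval t p) := by
      have h2 := Polynomial.aeval_algHom_apply (Algebra.lmul ℂ A) t p
      rwa [hml t, hml (Polynomial.aeval t p)] at h2
    rw [hE, ← Module.AEval.of_aeval_smul]
    congr 1
    rw [h1]
    rfl
  set v : Idx 𝓐 t d h → Module.AEval' (LinearMap.mulLeft ℂ t) :=
    fun i => E ((bElt 𝓐 t d h i : A)) with hv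
  -- the lifted family is linearly independent over ℂ[X]
  have hli : LinearIndependent (Polynomial ℂ) v := by
    rw [linearIndependent_iff']
    intro s g hsum i0 hi0
    by_contra hg0
    set s' := s.filter (fun i => ¬ g i = 0) with hs'
    have hne : s'.Nonempty := ⟨i0, Finset.mem_filter.mpr ⟨hi0, hg0⟩⟩
    set N := s'.sup (fun i => i.1 + d * (g i).natDegree) with hN
    obtain ⟨imax, himax, hNmax⟩ :=
      Finset.exists_mem_eq_sup s' hne (fun i => i.1 + d * (g i).natDegree)
    rw [← hN] at hNmax
    have hble : ∀ i ∈ s', i.1 + d * (g i).natDegree ≤ N := fun i hi =>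
      le_of_le_of_eq (Finset.le_sup (f := fun i => i.1 + d * (g i).natDegree) hi) hN.symm
    clear_value N
    clear hN
    have hdegN : ∀ i ∈ s', (g i).natDegree ≤ N := by
      intro i hi
      have h1 : i.1 + d * (g i).natDegree ≤ N := hble i hi
      have h2 : (g i).natDegree ≤ d * (g i).natDegree := Nat.le_mul_of_pos_left _ (by omega)
      exact le_trans h2 (le_trans (Nat.le_add_left _ _) h1)
    have hsum' : ∑ i ∈ s', g i • v i = 0 := by
      rw [← hsum]
      exact Finset.sum_filter_of_ne (fun i hi hne0 hgi => hne0 (by rw [hgi, zero_smul]))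
    have hsumA : ∑ i ∈ s', Polynomial.aeval t (g i) * (bElt 𝓐 t d h i : A) = 0 := by
      apply E.injective
      rw [map_zero, map_sum]
      rw [← hsum']
      exact Finset.sum_congr rfl fun i hi => (hsmulE _ _).symm
    have hsumA2 : ∑ i ∈ s', ∑ k ∈ Finset.range (N + 1),
        (g i).coeff k • (t ^ k * (bElt 𝓐 t d h i : A)) = 0 := by
      rw [← hsumA]
      refine Finset.sum_congr rfl fun i hi => ?_
      rw [Polynomial.aeval_eq_sum_range' (Nat.lt_succ_of_le (hdegN i hi)), Finset.sum_mul]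
      exact Finset.sum_congr rfl fun k _ => (smul_mul_assoc _ _ _).symm
    set P := s' ×ˢ Finset.range (N + 1) with hP
    set Tf : Idx 𝓐 t d h × ℕ → ↥(𝓐 N) := fun p =>
      if hp : p.1.1 + d * p.2 ≤ N then
        ⟨t ^ p.2 * (bElt 𝓐 t d h p.1 : A),
          hmono hp (tpow_mem 𝓐 t d h p.2 p.1.1 _ (bElt 𝓐 t d h p.1).2)⟩
      else 0 with hTf
    have hcoeff0 : ∀ p : Idx 𝓐 t d h × ℕ, p.1 ∈ s' → ¬ p.1.1 + d * p.2 ≤ N →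
        (g p.1).coeff p.2 = 0 := by
      intro p hp hnle
      apply Polynomial.coeff_eq_zero_of_natDegree_lt
      have h1 : p.1.1 + d * (g p.1).natDegree ≤ N := hble p.1 hp
      have h3 : p.1.1 + d * (g p.1).natDegree < p.1.1 + d * p.2 :=
        lt_of_le_of_lt h1 (not_le.mp hnle)
      exact Nat.lt_of_mul_lt_mul_left (Nat.lt_of_add_lt_add_left h3)
    have hTsum : (∑ p ∈ P, (g p.1).coeff p.2 • Tf p) = (0 : ↥(𝓐 N)) := by
      have hval : ((∑ p ∈ P, (g p.1).coeff p.2 • Tf p : ↥(𝓐 N)) : A)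
          = ∑ p ∈ P, (g p.1).coeff p.2 • ((Tf p : ↥(𝓐 N)) : A) := by
        rw [AddSubmonoidClass.coe_finset_sum]
        exact Finset.sum_congr rfl fun p _ => by simp
      apply Subtype.ext
      rw [hval]
      show _ = (0 : A)
      rw [← hsumA2, ← Finset.sum_product']
      refine Finset.sum_congr rfl fun p hp => ?_
      obtain ⟨hp1, hp2⟩ := Finset.mem_product.mp hp
      by_cases hle : p.1.1 + d * p.2 ≤ N
      · rw [hTf]
        simp only [dif_pos hle]
      · rw [hcoeff0 p hp1 hle, zero_smul, zero_smul]
    set φN := (gio 𝓐 N).comp (gpi 𝓐 N) with hφN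
    have hGr : ∑ p ∈ P, (g p.1).coeff p.2 • φN (Tf p) = 0 := by
      have := congrArg φN hTsum
      rw [map_sum, map_zero] at this
      simpa [map_smul] using this
    have hpredF : ∀ {n : ℕ}, n < N → ∀ x : A, x ∈ 𝓐 n → x ∈ predF 𝓐 N := by
      intro n hn x hx
      cases N with
      | zero => omega
      | succ N' => exact hmono (by omega) hx
    have hterm : ∀ p ∈ P, (g p.1).coeff p.2 • φN (Tf p)
        = (if p.1.1 + d * p.2 = N then (g p.1).coeff p.2 else 0) •
          ((σm ^ p.2) (gio 𝓐 p.1.1 (cElt 𝓐 t d h p.1))) := by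
      intro p hp
      obtain ⟨hp1, hp2⟩ := Finset.mem_product.mp hp
      by_cases hpe : p.1.1 + d * p.2 = N
      · rw [if_pos hpe]
        congr 1
        rw [hTf]
        simp only [dif_pos (le_of_eq hpe)]
        rw [hφN, LinearMap.comp_apply]
        rw [gpi_shift_pow 𝓐 t d h p.2 hpe (bElt 𝓐 t d h p.1)
          (hmono (le_of_eq hpe) (tpow_mem 𝓐 t d h p.2 p.1.1 _ (bElt 𝓐 t d h p.1).2)),
          gpi_bElt]
      · rw [if_neg hpe, zero_smul ℂ ((σm ^ p.2) (gio 𝓐 p.1.1 (cElt 𝓐 t d h p.1)))]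
        by_cases hle : p.1.1 + d * p.2 ≤ N
        · have hlt : p.1.1 + d * p.2 < N := lt_of_le_of_ne hle hpe
          have hzero : φN (Tf p) = 0 := by
            rw [hTf]
            simp only [dif_pos hle]
            rw [hφN, LinearMap.comp_apply]
            have : gpi 𝓐 N ⟨t ^ p.2 * (bElt 𝓐 t d h p.1 : A),
                hmono hle (tpow_mem 𝓐 t d h p.2 p.1.1 _ (bElt 𝓐 t d h p.1).2)⟩ = 0 := by
              rw [gpi, Submodule.mkQ_apply, Submodule.Quotient.mk_eq_zero]
              rw [Submodule.mem_comap]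
              exact hpredF hlt _ (hmono (le_refl _)
                (tpow_mem 𝓐 t d h p.2 p.1.1 _ (bElt 𝓐 t d h p.1).2))
            rw [this, map_zero]
          rw [hzero]; exact smul_zero (A := Gr 𝓐) ((g p.1).coeff p.2)
        · rw [hcoeff0 p hp1 hle, zero_smul ℂ (φN (Tf p))]
    have hFrel : ∑ p ∈ P, (if p.1.1 + d * p.2 = N then (g p.1).coeff p.2 else 0) •
        ((σm ^ p.2) (gio 𝓐 p.1.1 (cElt 𝓐 t d h p.1))) = 0 := by
      rw [← hGr]
      exact (Finset.sum_congr rfl hterm).symm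
    have hmem : (imax, (g imax).natDegree) ∈ P :=
      Finset.mem_product.mpr ⟨himax, Finset.mem_range.mpr (Nat.lt_succ_of_le (hdegN imax himax))⟩
    have := linearIndependent_iff'.mp (GI 𝓐 t d h hinj) P
      (fun p => if p.1.1 + d * p.2 = N then (g p.1).coeff p.2 else 0) hFrel
      (imax, (g imax).natDegree) hmem
    simp only at this
    rw [if_pos hNmax.symm] at this
    have hgimax : ¬ g imax = 0 := (Finset.mem_filter.mp himax).2
    exact hgimax (Polynomial.leadingCoeff_eq_zero.mp this)
  -- the lifted family spans
  have hspan : ⊤ ≤ Submodule.span (Polynomial ℂ) (Set.range v) := by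
    have main : ∀ N : ℕ, ∀ a : A, a ∈ 𝓐 N →
        E a ∈ Submodule.span (Polynomial ℂ) (Set.range v) := by
      intro N
      induction N using Nat.strong_induction_on with
      | _ N ihN =>
      intro a ha
      have hx : gpi 𝓐 N ⟨a, ha⟩ ∈ Wp 𝓐 t d h N ⊔ Cp 𝓐 t d h N := by
        rw [(isCompl_Cp 𝓐 t d h N).sup_eq_top]
        trivial
      obtain ⟨w, hw, c, hc, hwc⟩ := Submodule.mem_sup.mp hx
      -- express c via the chosen basis
      set r := (bC 𝓐 t d h N).repr ⟨c, hc⟩ with hr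
      have hcrep : (r.sum fun j rc => rc • cElt 𝓐 t d h ⟨N, j⟩) = c := by
        have h1 := (bC 𝓐 t d h N).linearCombination_repr ⟨c, hc⟩
        have h2 := congrArg ((Cp 𝓐 t d h N).subtype) h1
        rw [Finsupp.linearCombination_apply, map_finsuppSum] at h2
        simpa [cElt] using h2
      set bSum : ↥(𝓐 N) := r.sum fun j rc => rc • bElt 𝓐 t d h ⟨N, j⟩ with hbSum
      have hgbSum : gpi 𝓐 N bSum = c := by
        rw [hbSum, map_finsuppSum, ← hcrep]
        exact Finsupp.sum_congr fun j hj => by rw [map_smul, gpi_bElt 𝓐 t d h ⟨N, j⟩]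
      -- express w via a lift from lower filtration
      obtain ⟨tx, htx, hgw⟩ : ∃ tx : ↥(𝓐 N),
          (E (tx : A) ∈ Submodule.span (Polynomial ℂ) (Set.range v)) ∧ gpi 𝓐 N tx = w := by
        rcases Wp_struct 𝓐 t d h hw with hw0 | ⟨hdN, y, hy⟩
        · exact ⟨0, by rw [Submodule.coe_zero, map_zero]; exact Submodule.zero_mem _,
            by rw [map_zero, hw0]⟩
        · obtain ⟨x', hx'⟩ := Submodule.Quotient.mk_surjective _ y
          have hmem : t * (x' : A) ∈ 𝓐 N := by
            have := h (N - d) _ x'.2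
            rwa [Nat.sub_add_cancel hdN] at this
          refine ⟨⟨t * (x' : A), hmem⟩, ?_, ?_⟩
          · have hEx : E (t * (x' : A)) = (X : ℂ[X]) • E (x' : A) := by
              rw [hE, Module.AEval'.X_smul_of]
              rfl
            show E (t * (x' : A)) ∈ _
            rw [hEx]
            exact Submodule.smul_mem _ _ (ihN (N - d) (by omega) _ x'.2)
          · apply gio_inj 𝓐 N
            rw [gpi_shift 𝓐 t d h (Nat.sub_add_cancel hdN) x' hmem]
            have hgx' : gpi 𝓐 (N - d) x' = y := hx'
            rw [hgx', ← hy]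
      set a' : ↥(𝓐 N) := ⟨a, ha⟩ - bSum - tx with ha'
      have hga' : gpi 𝓐 N a' = 0 := by
        rw [ha', map_sub, map_sub, hgbSum, hgw, ← hwc]
        abel
      have hpa' : (a' : A) ∈ predF 𝓐 N := by
        have := hga'
        rw [gpi, Submodule.mkQ_apply, Submodule.Quotient.mk_eq_zero, Submodule.mem_comap] at this
        exact this
      have hEa' : E (a' : A) ∈ Submodule.span (Polynomial ℂ) (Set.range v) := by
        cases N with
        | zero =>
            have : (a' : A) = 0 := by simpa [predF] using hpa'
            rw [this, map_zero]
            exact Submodule.zero_mem _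
        | succ N' => exact ihN N' (by omega) _ hpa'
      have hEbSum : E (bSum : A) ∈ Submodule.span (Polynomial ℂ) (Set.range v) := by
        have hval : (bSum : A) = r.sum fun j rc => rc • ((bElt 𝓐 t d h ⟨N, j⟩ : A)) := by
          rw [hbSum]
          have h3 := map_finsuppSum ((𝓐 N).subtype) r
            (fun j rc => rc • bElt 𝓐 t d h ⟨N, j⟩)
          simpa using h3
        rw [hval, map_finsuppSum]
        refine Submodule.sum_mem _ fun j hj => ?_
        have he : (Polynomial.C (r j)) • E (bElt 𝓐 t d h ⟨N, j⟩ : A)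
            = E ((r j) • (bElt 𝓐 t d h ⟨N, j⟩ : A)) := by
          rw [hsmulE, Polynomial.aeval_C, ← Algebra.smul_def]
        show E ((r j) • (bElt 𝓐 t d h ⟨N, j⟩ : A)) ∈ _
        rw [← he]
        exact Submodule.smul_mem _ _ (Submodule.subset_span ⟨⟨N, j⟩, rfl⟩)
      have haeq : a = (a' : A) + (bSum : A) + (tx : A) := by
        rw [ha']
        push_cast
        abel
      rw [haeq, map_add, map_add]
      exact Submodule.add_mem _ (Submodule.add_mem _ hEa' hEbSum) htx
    intro x _
    have hxtop : E.symm x ∈ ⨆ n, 𝓐 n := by rw [hexh]; trivial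
    obtain ⟨n, hn⟩ := (Submodule.mem_iSup_of_directed 𝓐 hmono.directed_le).mp hxtop
    have := main n (E.symm x) hn
    simpa using this
  exact Module.Free.of_basis (Module.Basis.mk hli hspan)


/-- Let `A` be a filtered `ℂ`-algebra with exhaustive ascending filtration
`ℂ = 𝓐 0 ⊆ 𝓐 1 ⊆ ⋯` and let `t` be a central element, `t ∈ 𝓐 d \ 𝓐 (d-1)` with symbol
`σ(t) ∈ Gr A`.  If `Gr A` is free as a module over `ℂ[σ(t)]` (i.e. over `ℂ[X]` with `X`
acting by multiplication by `σ(t)`), then `A` is free as a module over `ℂ[t]` (i.e. over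
`ℂ[X]` with `X` acting by multiplication by `t`). -/
theorem free_of_gr_free (𝓐 : ℕ → Submodule ℂ A)
    (hmono : Monotone 𝓐) (hone : 𝓐 0 = 1) (hexh : ⨆ n, 𝓐 n = ⊤)
    (hmul : ∀ m n : ℕ, 𝓐 m * 𝓐 n ≤ 𝓐 (m + n))
    (t : A) (hcentral : ∀ a : A, Commute t a)
    (d : ℕ) (ht : t ∈ 𝓐 d) (hd : 1 ≤ d) (ht' : t ∉ 𝓐 (d - 1))
    (h : ∀ n, ∀ a ∈ 𝓐 n, t * a ∈ 𝓐 (n + d))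
    (hfree : Module.Free (Polynomial ℂ) (Module.AEval' (grSymbolMul 𝓐 t d h))) :
    Module.Free (Polynomial ℂ) (Module.AEval' (LinearMap.mulLeft ℂ t)) := by
  exact free_of_gr_free' 𝓐 hmono hexh t d hd h hfree

end FilteredFree
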